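/- If a closed disk D of radius r contains a finite point set S and some point v ∈ S lies on the boundary circle of D, then v is an extreme point of the circular hull α_r(S) (i.e., v ∈ α_r(S) and v lies on the boundary of α_r(S)); conversely if v ∈ S lies on ∂α_r(S) then there is a radius-r disk containing S with v on its boundary circle. -/

import Mathlib

open Metric Set

/-- For a finite `r`-coverable set `S` and `v ∈ S`: there is a radius-`r` disk containing `S`
with `v` on its boundary circle iff `v` lies on the boundary of the circular hull `α_r(S)`. -/
theorem stmt_11 (S : Finset (EuclideanSpace ℝ (Fin 2))) (r : ℝ) (hr : 0 < r)
    (hcov : ∃ c : EuclideanSpace ℝ (Fin 2), (S : Set (EuclideanSpace ℝ (Fin 2))) ⊆ closedBall c r)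
    (v : EuclideanSpace ℝ (Fin 2)) (hv : v ∈ S) :
    (∃ c : EuclideanSpace ℝ (Fin 2),
        (S : Set (EuclideanSpace ℝ (Fin 2))) ⊆ closedBall c r ∧ dist v c = r) ↔
      v ∈ frontier (⋂ c ∈ {c : EuclideanSpace ℝ (Fin 2) |
        (S : Set (EuclideanSpace ℝ (Fin 2))) ⊆ closedBall c r}, closedBall c r) := by
  set C : Set (EuclideanSpace ℝ (Fin 2)) :=
    {c : EuclideanSpace ℝ (Fin 2) | (S : Set (EuclideanSpace ℝ (Fin 2))) ⊆ closedBall c r}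
  set H : Set (EuclideanSpace ℝ (Fin 2)) := ⋂ c ∈ C, closedBall c r with hH
  have hvH : v ∈ H := by
    refine mem_iInter₂.2 fun c hc => hc hv
  have hHclosed : IsClosed H :=
    isClosed_biInter fun c _ => isClosed_closedBall
  have hfr : frontier H = H \ interior H := hHclosed.frontier_eq
  constructor
  · rintro ⟨c, hc, hdc⟩
    rw [hfr]
    refine ⟨hvH, fun hint => ?_⟩
    have hsub : H ⊆ closedBall c r := biInter_subset_of_mem hc
    have : v ∈ interior (closedBall c r) := interior_mono hsub hint
    rw [interior_closedBall c hr.ne'] at this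
    exact absurd (mem_ball.1 this) (by simp [hdc])
  · intro hfrv
    rw [hfr] at hfrv
    by_contra hno
    push_neg at hno
    -- every cover center has dist v c < r
    have hlt : ∀ c ∈ C, dist v c < r := fun c hc =>
      lt_of_le_of_ne (mem_closedBall.1 (hc hv)) (hno c hc)
    -- C is compact: closed and contained in closedBall v r
    have hCclosed : IsClosed C := by
      have : C = ⋂ s ∈ (S : Set (EuclideanSpace ℝ (Fin 2))), closedBall s r := by
        ext c
        simp [C, Set.subset_def, mem_closedBall, dist_comm]
      rw [this]
      exact isClosed_biInter fun s _ => isClosed_closedBall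
    have hCsub : C ⊆ closedBall v r := fun c hc =>
      mem_closedBall.2 (by rw [dist_comm]; exact mem_closedBall.1 (hc hv))
    have hCcpt : IsCompact C :=
      (isCompact_closedBall v r).of_isClosed_subset hCclosed hCsub
    obtain ⟨c, hcC⟩ := hcov
    obtain ⟨c₀, hc₀C, hmax⟩ := hCcpt.exists_isMaxOn ⟨c, hcC⟩
      ((continuous_const.dist continuous_id).continuousOn :
        ContinuousOn (fun c => dist v c) C)
    have hm : dist v c₀ < r := hlt c₀ hc₀C
    have hpos : 0 < r - dist v c₀ := sub_pos.2 hm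
    apply hfrv.2
    refine mem_interior.2 ⟨ball v (r - dist v c₀), ?_, isOpen_ball, mem_ball_self hpos⟩
    intro w hw
    refine mem_iInter₂.2 fun c hc => mem_closedBall.2 ?_
    calc dist w c ≤ dist w v + dist v c := dist_triangle _ _ _
      _ ≤ dist w v + dist v c₀ := by have := hmax hc; simp only [id, Set.mem_setOf_eq] at this; linarith
      _ ≤ (r - dist v c₀) + dist v c₀ := by linarith [mem_ball.1 hw]
      _ = r := by ring
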